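/- Let n, k be positive integers with 1 ≤ k < n. For all α, β ∈ F_q, Σ_{x ∈ F_q} χ1(α·x^{2^k+1} + β·(x+1)^{2^k+1}) = χ1(β) · S(α + β, β^{2^{n−k}} + β), where S(u, v) = Σ_{x ∈ F_q} χ1(u·x^{2^k+1} + v·x). -/
import Mathlib


/-- The absolute trace map `Tr : F → F_2`, viewed inside `F` (its values lie in `{0,1}`),
for a field `F` with `2^n` elements. -/
def absTr (n : ℕ) {F : Type*} [Field F] (x : F) : F :=
  ∑ i ∈ Finset.range n, x ^ (2 ^ i)

/-- The canonical additive character `χ1(x) = (−1)^{Tr(x)} ∈ ℤ`. -/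
def chi (n : ℕ) {F : Type*} [Field F] [DecidableEq F] (x : F) : ℤ :=
  if absTr n x = 0 then 1 else -1

section Aux

variable {F : Type*} [Field F] [Fintype F] [DecidableEq F] [CharP F 2]

lemma absTr_add (n : ℕ) (x y : F) : absTr n (x + y) = absTr n x + absTr n y := by
  simp [absTr, add_pow_char_pow, Finset.sum_add_distrib]

lemma absTr_sq (n : ℕ) (hcard : Fintype.card F = 2 ^ n) (x : F) :
    absTr n (x ^ 2) = absTr n x := by
  have hx : x ^ (2 ^ n) = x := by rw [← hcard]; exact FiniteField.pow_card x
  have h1 : ∀ i, (x ^ 2) ^ (2 ^ i) = x ^ (2 ^ (i + 1)) := by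
    intro i; rw [← pow_mul, pow_succ, mul_comm (2 ^ i) 2]
  have key : (∑ i ∈ Finset.range n, x ^ (2 ^ (i + 1))) + x ^ (2 ^ 0) =
      (∑ i ∈ Finset.range n, x ^ (2 ^ i)) + x ^ (2 ^ 0) := by
    rw [← Finset.sum_range_succ' (fun i => x ^ (2 ^ i)) n, Finset.sum_range_succ]
    simp [hx]
  unfold absTr
  simp only [h1]
  exact add_right_cancel key

lemma absTr_mem (n : ℕ) (hcard : Fintype.card F = 2 ^ n) (x : F) :
    absTr n x = 0 ∨ absTr n x = 1 := by
  have h : (absTr n x) ^ 2 = absTr n x := by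
    have hsum : (absTr n x) ^ 2 = absTr n (x ^ 2) := by
      unfold absTr
      have hfro := map_sum (frobenius F 2) (fun i => x ^ (2 ^ i)) (Finset.range n)
      simp only [frobenius_def] at hfro
      rw [hfro]
      exact Finset.sum_congr rfl fun i _ => by
        rw [← pow_mul, ← pow_mul, mul_comm]
    rw [hsum, absTr_sq n hcard]
  have h2 : absTr n x * (absTr n x - 1) = 0 := by ring_nf; linear_combination h
  rcases mul_eq_zero.mp h2 with h3 | h3
  · exact Or.inl h3
  · exact Or.inr (by linear_combination h3)

lemma chi_add (n : ℕ) (hcard : Fintype.card F = 2 ^ n) (x y : F) :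
    chi n (x + y) = chi n x * chi n y := by
  have hx := absTr_mem n hcard x
  have hy := absTr_mem n hcard y
  unfold chi
  rw [absTr_add]
  rcases hx with hx | hx <;> rcases hy with hy | hy <;>
    simp [hx, hy, CharTwo.add_self_eq_zero, one_ne_zero]

lemma absTr_pow (n : ℕ) (hcard : Fintype.card F = 2 ^ n) (m : ℕ) (x : F) :
    absTr n (x ^ (2 ^ m)) = absTr n x := by
  induction m with
  | zero => simp
  | succ m ih => rw [pow_succ, pow_mul, absTr_sq n hcard, ih]

lemma absTr_key (n k : ℕ) (hk : k ≤ n) (hcard : Fintype.card F = 2 ^ n) (β x : F) :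
    absTr n (β * x ^ (2 ^ k)) = absTr n (β ^ (2 ^ (n - k)) * x) := by
  have hx : x ^ (2 ^ n) = x := by rw [← hcard]; exact FiniteField.pow_card x
  have h := absTr_pow n hcard (n - k) (β * x ^ (2 ^ k))
  rw [← h, mul_pow, ← pow_mul, ← pow_add]
  have : k + (n - k) = n := by omega
  rw [this, hx]

end Aux

/-- For all `α, β` in the field `F` with `2^n` elements,
`Σ_x χ1(α x^{2^k+1} + β (x+1)^{2^k+1}) = χ1(β) · S(α+β, β^{2^{n−k}} + β)`,
where `S(u,v) = Σ_x χ1(u x^{2^k+1} + v x)`. -/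
theorem gold_shifted_weil_sum (n k : ℕ) (hk1 : 1 ≤ k) (hkn : k < n)
    {F : Type*} [Field F] [Fintype F] [DecidableEq F] [CharP F 2]
    (hcard : Fintype.card F = 2 ^ n) :
    ∀ α β : F,
      ∑ x : F, chi n (α * x ^ (2 ^ k + 1) + β * (x + 1) ^ (2 ^ k + 1)) =
        chi n β *
          ∑ x : F, chi n ((α + β) * x ^ (2 ^ k + 1) + (β ^ (2 ^ (n - k)) + β) * x) := by
  intro α β
  rw [Finset.mul_sum]
  refine Finset.sum_congr rfl fun x _ => ?_
  have h2 : (x + 1) ^ (2 ^ k) = x ^ (2 ^ k) + 1 := by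
    rw [add_pow_char_pow, one_pow]
  have h1 : (x + 1) ^ (2 ^ k + 1) = x ^ (2 ^ k + 1) + x ^ (2 ^ k) + x + 1 := by
    rw [pow_succ, h2]; ring
  have e1 : α * x ^ (2 ^ k + 1) + β * (x + 1) ^ (2 ^ k + 1) =
      β + (β * x ^ (2 ^ k) + ((α + β) * x ^ (2 ^ k + 1) + β * x)) := by
    rw [h1]; ring
  rw [e1, chi_add n hcard]
  congr 1
  have e2 : chi n (β * x ^ (2 ^ k) + ((α + β) * x ^ (2 ^ k + 1) + β * x)) =
      chi n (β ^ (2 ^ (n - k)) * x + ((α + β) * x ^ (2 ^ k + 1) + β * x)) := by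
    unfold chi
    rw [absTr_add, absTr_key n k hkn.le hcard, ← absTr_add]
  rw [e2]
  congr 1
  ring
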